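/- Suppose X is a Tychonoff space such that X^n has the Menger property for every n ∈ ω, A is a countable subset of C_p(X) containing the zero function 0, and 0 is a limit point of A. Then the family 𝒰 = {U ⊆ A : 0 ∈ Int_A(U)} is Menger as a subspace of 𝒫(A), where Int_A denotes interior in the subspace topology that A inherits from C_p(X). -/

import Mathlib

open Set Topology Filter

/-- A topological space is *Menger* if for every sequence of open covers there are finite
subfamilies whose unions form a cover. -/
def IsMenger (X : Type*) [TopologicalSpace X] : Prop :=
  ∀ U : ℕ → Set (Set X),
    (∀ n, ∀ u ∈ U n, IsOpen u) → (∀ n, ⋃₀ U n = Set.univ) →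
    ∃ V : ℕ → Set (Set X),
      (∀ n, V n ⊆ U n ∧ (V n).Finite) ∧ (⋃ n, ⋃₀ V n) = Set.univ

/-- The Menger property for a subspace. -/
def IsMengerSet {X : Type*} [TopologicalSpace X] (S : Set X) : Prop :=
  IsMenger ↥S

/-- The Cantor-space topology on the power set `𝒫(α)`, identifying a subset with its
characteristic function in the product of discrete two-point spaces. -/
def cantorTop (α : Type*) : TopologicalSpace (Set α) :=
  TopologicalSpace.induced (fun (S : Set α) (a : α) => a ∈ S)
    (@Pi.topologicalSpace α (fun _ => Prop) (fun _ => ⊥))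



section CantorFacts
variable {β : Type*}

private def cantorInst (β : Type*) : TopologicalSpace (Set β) := cantorTop β

attribute [local instance] cantorInst

private lemma prop_topology_eq : (cantorInst β) =
    TopologicalSpace.induced (fun (S : Set β) (a : β) => a ∈ S)
      (@Pi.topologicalSpace β (fun _ => Prop) (fun _ => ⊥)) := rfl

private lemma cantor_isOpen_not_mem (a : β) : IsOpen {S : Set β | a ∉ S} := by
  letI : TopologicalSpace Prop := ⊥
  haveI : DiscreteTopology Prop := discreteTopology_bot Prop
  have h : Continuous (fun (S : Set β) (b : β) => b ∈ S) := by
    rw [continuous_iff_le_induced]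
    exact le_of_eq prop_topology_eq
  have h2 : Continuous fun S : Set β => a ∈ S := (continuous_apply a).comp h
  exact h2.isOpen_preimage {p : Prop | ¬ p} (isOpen_discrete _)

private lemma cantor_isClosed_mem (a : β) : IsClosed {S : Set β | a ∈ S} := by
  rw [← isOpen_compl_iff]
  have : {S : Set β | a ∈ S}ᶜ = {S : Set β | a ∉ S} := rfl
  rw [this]; exact cantor_isOpen_not_mem a

private lemma cantor_compactSpace : CompactSpace (Set β) := by
  letI : TopologicalSpace Prop := ⊥
  haveI : DiscreteTopology Prop := discreteTopology_bot Prop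
  haveI : CompactSpace (β → Prop) := inferInstance
  let e : Set β ≃ (β → Prop) :=
    ⟨fun S b => b ∈ S, fun f => {b | f b}, fun S => rfl, fun f => rfl⟩
  have he : Continuous e := by
    rw [continuous_iff_le_induced]
    exact le_of_eq prop_topology_eq
  have he' : Continuous e.symm := by
    rw [continuous_iff_le_induced, prop_topology_eq, induced_compose]
    exact le_of_eq induced_id.symm
  exact (Homeomorph.mk e he he').symm.compactSpace

/-- Cone extraction: given an open cover of an upward-closed family `𝒰` in the Cantor
space `Set β`, each `U ∈ 𝒰` yields a finite `s ⊆ U` whose "upper cone" within `𝒰` is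
covered by finitely many members of the cover. -/
private lemma cone_extraction {𝒰 : Set (Set β)}
    (hup : ∀ U V : Set β, U ∈ 𝒰 → U ⊆ V → V ∈ 𝒰)
    (𝒞 : Set (Set ↥𝒰)) (hopen : ∀ c ∈ 𝒞, IsOpen c) (hcov : ⋃₀ 𝒞 = Set.univ)
    {U : Set β} (hU : U ∈ 𝒰) :
    ∃ s : Finset β, ↑s ⊆ U ∧ ∃ 𝒟 : Set (Set ↥𝒰), 𝒟 ⊆ 𝒞 ∧ 𝒟.Finite ∧
      ∀ (W₀ : Set β) (hW : W₀ ∈ 𝒰), ↑s ⊆ W₀ → (⟨W₀, hW⟩ : ↥𝒰) ∈ ⋃₀ 𝒟 := by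
  classical
  haveI : CompactSpace (Set β) := cantor_compactSpace
  have hext : ∀ c : ↥𝒞, ∃ C : Set (Set β), IsOpen C ∧ Subtype.val ⁻¹' C = c.1 :=
    fun c => isOpen_induced_iff.mp (hopen c.1 c.2)
  choose Ch hChopen hChpre using hext
  have hcone_closed : IsClosed {V₀ : Set β | U ⊆ V₀} := by
    have heq : {V₀ : Set β | U ⊆ V₀} = ⋂ a ∈ U, {V₀ : Set β | a ∈ V₀} := by
      ext V₀; simp [Set.subset_def]
    rw [heq]
    exact isClosed_biInter fun a _ => cantor_isClosed_mem a
  have hcone_cpt : IsCompact {V₀ : Set β | U ⊆ V₀} := hcone_closed.isCompact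
  have hconecov : {V₀ : Set β | U ⊆ V₀} ⊆ ⋃ c : ↥𝒞, Ch c := by
    intro V₀ hV₀
    have hV𝒰 : V₀ ∈ 𝒰 := hup U V₀ hU hV₀
    have hmem : (⟨V₀, hV𝒰⟩ : ↥𝒰) ∈ ⋃₀ 𝒞 := by rw [hcov]; trivial
    obtain ⟨c, hc, hmemc⟩ := hmem
    refine mem_iUnion.mpr ⟨⟨c, hc⟩, ?_⟩
    have h2 : Subtype.val ⁻¹' Ch ⟨c, hc⟩ = c := hChpre ⟨c, hc⟩
    rw [← h2] at hmemc
    exact hmemc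
  obtain ⟨tc, htc⟩ := hcone_cpt.elim_finite_subcover _ (fun c => hChopen c) hconecov
  set O : Set (Set β) := ⋃ c ∈ tc, Ch c with hO
  have hOopen : IsOpen O := isOpen_biUnion fun c _ => hChopen c
  have hOc_cpt : IsCompact Oᶜ := hOopen.isClosed_compl.isCompact
  have hOc_cov : Oᶜ ⊆ ⋃ a : ↥U, {V₀ : Set β | a.1 ∉ V₀} := by
    intro V₀ hV₀
    by_contra hcontra
    simp only [mem_iUnion, mem_setOf_eq, not_exists, not_not] at hcontra
    have hUV : U ⊆ V₀ := fun a ha => hcontra ⟨a, ha⟩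
    exact hV₀ (htc hUV)
  obtain ⟨ta, hta⟩ := hOc_cpt.elim_finite_subcover _
    (fun a : ↥U => cantor_isOpen_not_mem a.1) hOc_cov
  refine ⟨ta.image Subtype.val, ?_, Subtype.val '' (tc : Set ↥𝒞), ?_, ?_, ?_⟩
  · intro a ha
    obtain ⟨b, _, rfl⟩ := Finset.mem_image.mp ha
    exact b.2
  · rintro c ⟨c', _, rfl⟩
    exact c'.2
  · exact (tc.finite_toSet).image _
  · intro W₀ hW hsW
    have hWO : W₀ ∈ O := by
      by_contra hWO
      obtain ⟨a, haT, haW⟩ := mem_iUnion₂.mp (hta hWO)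
      exact haW (hsW (Finset.mem_image_of_mem Subtype.val haT))
    obtain ⟨c, hctc, hWc⟩ := mem_iUnion₂.mp hWO
    refine ⟨c.1, ⟨c, hctc, rfl⟩, ?_⟩
    have h3 : (⟨W₀, hW⟩ : ↥𝒰) ∈ Subtype.val ⁻¹' Ch c := hWc
    rw [hChpre c] at h3
    exact h3

end CantorFacts

/-- `C_p(X)`: continuous real-valued functions with the topology of pointwise convergence,
i.e. the subspace topology inherited from `ℝ^X`. -/
abbrev Cp (X : Type*) [TopologicalSpace X] : Type _ := {f : X → ℝ // Continuous f}

/-- The zero function as an element of `C_p(X)`. -/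
instance (X : Type*) [TopologicalSpace X] : Zero (Cp X) :=
  ⟨⟨fun _ => 0, continuous_const⟩⟩



section CpFacts
variable {X : Type*} [TopologicalSpace X] {A : Set (Cp X)} (h0 : (0 : Cp X) ∈ A)

/-- basic neighborhoods traced on A are in the family -/
private lemma mem_base_tuple {m : ℕ} (xs : Fin m → X) {ε : ℝ} (hε : 0 < ε) :
    (⟨0, h0⟩ : ↥A) ∈ interior {a : ↥A | ∀ i, |(a : Cp X).1 (xs i)| < ε} := by
  have hopen : IsOpen {a : ↥A | ∀ i, |(a : Cp X).1 (xs i)| < ε} := by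
    have heq : {a : ↥A | ∀ i, |(a : Cp X).1 (xs i)| < ε}
        = ⋂ i, {a : ↥A | |(a : Cp X).1 (xs i)| < ε} := by
      ext a; simp [Set.mem_iInter]
    rw [heq]
    refine isOpen_iInter_of_finite fun i => ?_
    have hc : Continuous fun a : ↥A => (a : Cp X).1 (xs i) :=
      ((continuous_apply (xs i)).comp continuous_subtype_val).comp continuous_subtype_val
    exact isOpen_lt hc.abs continuous_const
  rw [hopen.interior_eq]
  intro i
  show |(0 : ℝ)| < ε
  simpa using hε

/-- every member of the family contains a basic trace -/
private lemma base_of_mem {U : Set ↥A} (hU : (⟨0, h0⟩ : ↥A) ∈ interior U) :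
    ∃ (m : ℕ) (xs : Fin m → X) (k : ℕ),
      ∀ a : ↥A, (∀ i, |(a : Cp X).1 (xs i)| < 1 / (k + 1 : ℝ)) → a ∈ U := by
  classical
  have hnhds : U ∈ 𝓝 (⟨0, h0⟩ : ↥A) := mem_interior_iff_mem_nhds.mp hU
  have hind : IsInducing (fun a : ↥A => ((a : Cp X) : X → ℝ)) :=
    (IsInducing.subtypeVal (t := {f : X → ℝ | Continuous f})).comp IsInducing.subtypeVal
  rw [hind.nhds_eq_comap] at hnhds
  obtain ⟨W', hW', hWU⟩ := mem_comap.mp hnhds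
  rw [nhds_pi, Filter.mem_pi] at hW'
  obtain ⟨I, hIfin, t, ht, htW'⟩ := hW'
  have hδ : ∀ x : X, ∃ δ : ℝ, 0 < δ ∧ ∀ y : ℝ, |y| < δ → y ∈ t x := by
    intro x
    obtain ⟨δ, hδpos, hball⟩ := Metric.mem_nhds_iff.mp (ht x)
    refine ⟨δ, hδpos, fun y hy => hball ?_⟩
    have h00 : ((0 : Cp X) : X → ℝ) x = 0 := rfl
    simpa [Real.dist_eq, h00] using hy
  choose δ hδpos hδmem using hδ
  set F : Finset X := hIfin.toFinset with hF
  set ε : ℝ := (insert (1 : ℝ) (F.image δ)).min' (Finset.insert_nonempty _ _) with hεdef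
  have hεpos : 0 < ε := by
    rw [hεdef, Finset.lt_min'_iff]
    intro y hy
    rcases Finset.mem_insert.mp hy with h | h
    · simp [h]
    · obtain ⟨x, _, rfl⟩ := Finset.mem_image.mp h
      exact hδpos x
  obtain ⟨k, hk⟩ := exists_nat_one_div_lt hεpos
  refine ⟨F.card, fun i => (F.equivFin.symm i : X), k, ?_⟩
  intro a ha
  apply hWU
  apply htW'
  intro x hxI
  have hxF : x ∈ F := hIfin.mem_toFinset.mpr hxI
  have hax : |(a : Cp X).1 x| < 1 / (k + 1 : ℝ) := by
    have := ha (F.equivFin ⟨x, hxF⟩)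
    simpa using this
  have hεδ : ε ≤ δ x :=
    Finset.min'_le _ _ (Finset.mem_insert_of_mem (Finset.mem_image_of_mem δ hxF))
  exact hδmem x _ (lt_of_lt_of_le (lt_trans hax hk) hεδ)

end CpFacts

/-- if `X` is Tychonoff with all finite powers Menger, `A ⊆ C_p(X)` is countable,
contains `0`, and `0` is a limit point of `A`, then the family of subsets of `A` whose
interior (in the subspace topology of `A`) contains `0` is Menger as a subspace of `𝒫(A)`. -/
theorem cp_neighborhood_family_menger (X : Type*) [TopologicalSpace X] [T35Space X]
    (hMenger : ∀ n : ℕ, IsMenger (Fin n → X))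
    (A : Set (Cp X)) (hA : A.Countable) (h0 : (0 : Cp X) ∈ A)
    (hlim : (0 : Cp X) ∈ closure (A \ {0})) :
    @IsMengerSet (Set ↥A) (cantorTop ↥A)
      {U : Set ↥A | (⟨0, h0⟩ : ↥A) ∈ interior U} := by
  classical
  unfold IsMengerSet IsMenger
  set 𝒰 : Set (Set ↥A) := {U : Set ↥A | (⟨0, h0⟩ : ↥A) ∈ interior U} with h𝒰
  intro 𝒞 hCopen hCcov
  have hup : ∀ U V : Set ↥A, U ∈ 𝒰 → U ⊆ V → V ∈ 𝒰 :=
    fun U V hU hUV => interior_mono hUV hU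
  have hB : ∀ (m k : ℕ) (xs : Fin m → X),
      {a : ↥A | ∀ i, |(a : Cp X).1 (xs i)| < 1 / (k + 1 : ℝ)} ∈ 𝒰 :=
    fun m k xs => mem_base_tuple h0 xs (by positivity)
  have hkey : ∀ (n m k : ℕ) (xs : Fin m → X), ∃ s : Finset ↥A,
      ↑s ⊆ {a : ↥A | ∀ i, |(a : Cp X).1 (xs i)| < 1 / (k + 1 : ℝ)} ∧
      ∃ 𝒟 : Set (Set ↥𝒰), 𝒟 ⊆ 𝒞 n ∧ 𝒟.Finite ∧
        ∀ (W₀ : Set ↥A) (hW : W₀ ∈ 𝒰), ↑s ⊆ W₀ → (⟨W₀, hW⟩ : ↥𝒰) ∈ ⋃₀ 𝒟 :=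
    fun n m k xs => cone_extraction hup (𝒞 n) (hCopen n) (hCcov n) (hB m k xs)
  choose s hs 𝒟 h𝒟sub h𝒟fin h𝒟cone using hkey
  set pr : ℕ ≃ ℕ × ℕ × ℕ := (Denumerable.eqv (ℕ × ℕ × ℕ)).symm with hprdef
  set Wn : ∀ (_ m : ℕ), ℕ → (Fin m → X) → Set (Fin m → X) :=
    fun n m k xs =>
      {ys | ∀ a ∈ s n m k xs, ∀ i : Fin m, |(a : Cp X).1 (ys i)| < 1 / (k + 1 : ℝ)}
    with hWndef
  have hWopen : ∀ (n m k : ℕ) (xs : Fin m → X), IsOpen (Wn n m k xs) := by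
    intro n m k xs
    have heq : Wn n m k xs = ⋂ a ∈ s n m k xs, ⋂ i : Fin m,
        {ys : Fin m → X | |(a : Cp X).1 (ys i)| < 1 / (k + 1 : ℝ)} := by
      ext ys; simp [hWndef]
    rw [heq]
    exact isOpen_biInter_finset fun a _ =>
      isOpen_iInter_of_finite fun i =>
        isOpen_lt (((a : Cp X).2.comp (continuous_apply i)).abs) continuous_const
  have hWmem : ∀ (n m k : ℕ) (xs : Fin m → X), xs ∈ Wn n m k xs := by
    intro n m k xs a ha i
    exact hs n m k xs (Finset.mem_coe.mpr ha) i
  have hM : ∀ m k : ℕ, ∃ V : ℕ → Set (Set (Fin m → X)),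
      (∀ j, V j ⊆ Set.range (Wn (pr.symm (m, k, j)) m k) ∧ (V j).Finite) ∧
      (⋃ j, ⋃₀ V j) = Set.univ := by
    intro m k
    refine hMenger m (fun j => Set.range (Wn (pr.symm (m, k, j)) m k)) ?_ ?_
    · rintro j u ⟨xs, rfl⟩
      exact hWopen _ _ _ xs
    · intro j
      refine Set.eq_univ_iff_forall.mpr fun ys => ?_
      exact ⟨Wn (pr.symm (m, k, j)) m k ys, ⟨ys, rfl⟩, hWmem _ _ _ ys⟩
  choose Vf hVf hVcov using hM
  have hrep : ∀ (m k j : ℕ), ∀ u ∈ Vf m k j,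
      ∃ xs : Fin m → X, Wn (pr.symm (m, k, j)) m k xs = u :=
    fun m k j u hu => (hVf m k j).1 hu
  choose rep hrepW using hrep
  have hVfin : ∀ m k j, (Vf m k j).Finite := fun m k j => (hVf m k j).2
  set E : ℕ → ℕ → ℕ → Set (Set ↥𝒰) := fun m k j =>
    ⋃ w : ↥(Vf m k j), 𝒟 (pr.symm (m, k, j)) m k (rep m k j w.1 w.2) with hEdef
  have hEsub : ∀ m k j, E m k j ⊆ 𝒞 (pr.symm (m, k, j)) := by
    intro m k j
    rw [hEdef]
    exact iUnion_subset fun w => h𝒟sub _ _ _ _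
  have hEfin : ∀ m k j, (E m k j).Finite := by
    intro m k j
    rw [hEdef]
    haveI : Finite ↥(Vf m k j) := (hVfin m k j).to_subtype
    exact Set.finite_iUnion fun w => h𝒟fin _ _ _ _
  refine ⟨fun n => E (pr n).1 (pr n).2.1 (pr n).2.2, ?_, ?_⟩
  · intro n
    constructor
    · have h1 := hEsub (pr n).1 (pr n).2.1 (pr n).2.2
      have h2 : ((pr n).1, (pr n).2.1, (pr n).2.2) = pr n := by
        simp
      rw [h2, Equiv.symm_apply_apply] at h1
      exact h1
    · exact hEfin _ _ _
  · rw [Set.eq_univ_iff_forall]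
    intro Ub
    obtain ⟨m, xs, k, hbase⟩ := base_of_mem h0 Ub.2
    have hxs : xs ∈ ⋃ j, ⋃₀ Vf m k j := by
      rw [hVcov m k]; trivial
    rw [mem_iUnion] at hxs
    obtain ⟨j, hxj⟩ := hxs
    obtain ⟨u, hu, hxu⟩ := hxj
    have n0 : ℕ := pr.symm (m, k, j)
    have hxW : xs ∈ Wn (pr.symm (m, k, j)) m k (rep m k j u hu) := by
      rw [hrepW m k j u hu]; exact hxu
    have hsub : ↑(s (pr.symm (m, k, j)) m k (rep m k j u hu)) ⊆ Ub.1 := by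
      intro a ha
      exact hbase a fun i => hxW a (Finset.mem_coe.mp ha) i
    have hcone := h𝒟cone (pr.symm (m, k, j)) m k (rep m k j u hu) Ub.1 Ub.2 hsub
    obtain ⟨d, hd, hUd⟩ := hcone
    have hdE : d ∈ E m k j := by
      rw [hEdef]
      exact mem_iUnion.mpr ⟨⟨u, hu⟩, hd⟩
    rw [mem_iUnion]
    refine ⟨pr.symm (m, k, j), ?_⟩
    have hpr : pr (pr.symm (m, k, j)) = (m, k, j) := pr.apply_symm_apply _
    show Ub ∈ ⋃₀ E (pr (pr.symm (m, k, j))).1 (pr (pr.symm (m, k, j))).2.1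
      (pr (pr.symm (m, k, j))).2.2
    rw [hpr]
    have hUU : Ub = (⟨Ub.1, Ub.2⟩ : ↥𝒰) := rfl
    rw [hUU]
    exact ⟨d, hdE, hUd⟩
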